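/- In the setting of the Kyber decoding-noise coefficients: with the same mutually independent mean-zero families {s_{t,j}}, {e_{t,j}}, {r_{t,j}}, {e1_{t,j}}, {cu_{t,j}}, {e2_j}, {cv_j} of finite-variance real random variables and n_{e,i} = Σ_{t=1}^{k} (e_t ⊛ r_t)_i + e2_i + cv_i − Σ_{t=1}^{k} (s_t ⊛ (e1_t + cu_t))_i, the distinct coefficients are uncorrelated: Cov(n_{e,i}, n_{e,i'}) = 0 for all i ≠ i' in {0,…,n−1}. -/

import Mathlib

open MeasureTheory ProbabilityTheory

/-- The `i`-th coefficient of the negacyclic convolution of two real-valued random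
sequences: `(a ⊛ b)_i = ∑_{j=0}^{n-1} ε(i,j) a_{(i-j) mod n} b_j`, where `ε(i,j) = 1`
if `j ≤ i` and `ε(i,j) = -1` if `j > i`. -/
noncomputable def nconv {Ω : Type*} {n : ℕ} (a b : Fin n → Ω → ℝ) (i : Fin n) (ω : Ω) : ℝ :=
  ∑ j : Fin n, (if (j : ℕ) ≤ (i : ℕ) then (1 : ℝ) else -1) * a (i - j) ω * b j ω

/-- The `i`-th Kyber decoding-noise coefficient
`n_{e,i} = ∑_t (e_t ⊛ r_t)_i + e2_i + cv_i − ∑_t (s_t ⊛ (e1_t + cu_t))_i`. -/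
noncomputable def kyberNoise {Ω : Type*} {k n : ℕ}
    (s e r e1 cu : Fin k → Fin n → Ω → ℝ) (e2 cv : Fin n → Ω → ℝ)
    (i : Fin n) (ω : Ω) : ℝ :=
  (∑ t : Fin k, nconv (e t) (r t) i ω) + e2 i ω + cv i ω
    - ∑ t : Fin k, nconv (s t) (fun j ω' => e1 t j ω' + cu t j ω') i ω

section KyberAux

variable {Ω : Type*} [MeasurableSpace Ω] {P : Measure Ω} [IsProbabilityMeasure P]
  {ι : Type*} {X : ι → Ω → ℝ}

lemma kyber_pair (hind : iIndepFun X P)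
    (hsq : ∀ m, MemLp (X m) 2 P) (h0 : ∀ m, (∫ ω, X m ω ∂P) = 0)
    {u v : ι} (huv : u ≠ v) :
    Integrable (fun ω => X u ω * X v ω) P ∧ (∫ ω, X u ω * X v ω ∂P) = 0 := by
  have hI := hind.indepFun huv
  have hu := (hsq u).integrable one_le_two
  have hv := (hsq v).integrable one_le_two
  refine ⟨hI.integrable_mul hu hv, ?_⟩
  have h := hI.integral_mul_eq_mul_integral hu.aestronglyMeasurable hv.aestronglyMeasurable
  simp only [Pi.mul_apply] at h
  rw [show (fun ω => X u ω * X v ω) = X u * X v from rfl]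
  simp only [Pi.mul_def]; rw [h, h0 u, h0 v, mul_zero]

lemma kyber_triple (hind : iIndepFun X P)
    (hm : ∀ m, Measurable (X m)) (hsq : ∀ m, MemLp (X m) 2 P)
    (h0 : ∀ m, (∫ ω, X m ω ∂P) = 0)
    {u v w : ι} (hvu : v ≠ u) (hwu : w ≠ u) (hwv : w ≠ v) :
    Integrable (fun ω => X u ω * X v ω * X w ω) P ∧
      (∫ ω, X u ω * X v ω * X w ω ∂P) = 0 := by
  have hpair := kyber_pair hind hsq h0 hvu.symm
  have hw := (hsq w).integrable one_le_two
  have hI : IndepFun (fun ω => X u ω * X v ω) (X w) P :=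
    hind.indepFun_mul_left hm u v w hwu.symm hwv.symm
  refine ⟨hI.integrable_mul hpair.1 hw, ?_⟩
  have h := hI.integral_mul_eq_mul_integral hpair.1.aestronglyMeasurable hw.aestronglyMeasurable
  simp only [Pi.mul_apply] at h
  rw [show (fun ω => X u ω * X v ω * X w ω)
      = (fun ω => X u ω * X v ω) * X w from rfl]
  simp only [Pi.mul_def]; rw [h, h0 w, mul_zero]

lemma kyber_quad (hind : iIndepFun X P)
    (hm : ∀ m, Measurable (X m)) (hsq : ∀ m, MemLp (X m) 2 P)
    (h0 : ∀ m, (∫ ω, X m ω ∂P) = 0)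
    {u v u' v' : ι} (hvu : v ≠ u) (hvu' : v ≠ u') (hv'u : v' ≠ u) (hv'u' : v' ≠ u')
    (hne : u ≠ u' ∨ v ≠ v') :
    Integrable (fun ω => X u ω * X v ω * (X u' ω * X v' ω)) P ∧
      (∫ ω, X u ω * X v ω * (X u' ω * X v' ω) ∂P) = 0 := by
  have hvint : ∀ m : ι, Integrable (X m) P := fun m => (hsq m).integrable one_le_two
  by_cases huu : u = u'
  · -- then v ≠ v'
    subst huu
    have hvv : v ≠ v' := hne.resolve_left (fun h => h rfl)
    have heq : (fun ω => X u ω * X v ω * (X u ω * X v' ω))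
        = fun ω => (X u ω * X u ω * X v ω) * X v' ω := by funext ω; ring
    have hsqint : Integrable (fun ω => X u ω * X u ω) P := by
      simpa [pow_two] using (hsq u).integrable_sq
    have hIuv : IndepFun (fun ω => X u ω * X u ω) (X v) P :=
      (hind.indepFun hvu.symm).comp
        (show Measurable fun x : ℝ => x * x from measurable_id.mul measurable_id)
        measurable_id
    have hAint : Integrable (fun ω => X u ω * X u ω * X v ω) P :=
      hIuv.integrable_mul hsqint (hvint v)
    have hIA : IndepFun (fun ω => X u ω * X u ω * X v ω) (X v') P := by
      have := (hind.indepFun_prodMk hm u v v' hv'u.symm hvv).comp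
        (show Measurable fun p : ℝ × ℝ => p.1 * p.1 * p.2 from
          ((measurable_fst.mul measurable_fst).mul measurable_snd)) measurable_id
      exact this
    constructor
    · rw [heq]; exact hIA.integrable_mul hAint (hvint v')
    · rw [heq]
      have h := hIA.integral_mul_eq_mul_integral hAint.aestronglyMeasurable (hvint v').aestronglyMeasurable
      simp only [Pi.mul_apply] at h
      rw [show (fun ω => (X u ω * X u ω * X v ω) * X v' ω)
          = (fun ω => X u ω * X u ω * X v ω) * X v' from rfl]
      simp only [Pi.mul_def]; rw [h, h0 v', mul_zero]
  · by_cases hvv : v = v'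
    · subst hvv
      have heq : (fun ω => X u ω * X v ω * (X u' ω * X v ω))
          = fun ω => (X v ω * X v ω * X u ω) * X u' ω := by funext ω; ring
      have hsqint : Integrable (fun ω => X v ω * X v ω) P := by
        simpa [pow_two] using (hsq v).integrable_sq
      have hIvu : IndepFun (fun ω => X v ω * X v ω) (X u) P :=
        (hind.indepFun hvu).comp
          (show Measurable fun x : ℝ => x * x from measurable_id.mul measurable_id)
          measurable_id
      have hAint : Integrable (fun ω => X v ω * X v ω * X u ω) P :=
        hIvu.integrable_mul hsqint (hvint u)
      have hIA : IndepFun (fun ω => X v ω * X v ω * X u ω) (X u') P := by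
        have := (hind.indepFun_prodMk hm v u u' hvu' (fun h => huu h)).comp
          (show Measurable fun p : ℝ × ℝ => p.1 * p.1 * p.2 from
            ((measurable_fst.mul measurable_fst).mul measurable_snd)) measurable_id
        exact this
      constructor
      · rw [heq]; exact hIA.integrable_mul hAint (hvint u')
      · rw [heq]
        have h := hIA.integral_mul_eq_mul_integral hAint.aestronglyMeasurable (hvint u').aestronglyMeasurable
        simp only [Pi.mul_apply] at h
        rw [show (fun ω => (X v ω * X v ω * X u ω) * X u' ω)
            = (fun ω => X v ω * X v ω * X u ω) * X u' from rfl]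
        simp only [Pi.mul_def]; rw [h, h0 u', mul_zero]
    · -- all four cross-distinct
      have hI4 : IndepFun (fun ω => X u ω * X v ω) (fun ω => X u' ω * X v' ω) P :=
        hind.indepFun_mul_mul hm u v u' v' huu hv'u.symm hvu' hvv
      have hp1 := kyber_pair hind hsq h0 hvu.symm
      have hp2 := kyber_pair hind hsq h0 hv'u'.symm
      refine ⟨hI4.integrable_mul hp1.1 hp2.1, ?_⟩
      have h := hI4.integral_mul_eq_mul_integral hp1.1.aestronglyMeasurable hp2.1.aestronglyMeasurable
      simp only [Pi.mul_apply] at h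
      rw [show (fun ω => X u ω * X v ω * (X u' ω * X v' ω))
          = (fun ω => X u ω * X v ω) * (fun ω => X u' ω * X v' ω) from rfl]
      simp only [Pi.mul_def]; rw [h, hp1.2, zero_mul]

end KyberAux

/-- Atomic term of the Kyber noise decomposition. -/
noncomputable def kAtom {Ω : Type*} {k n : ℕ}
    (X : (Fin 5 × Fin k × Fin n) ⊕ (Fin 2 × Fin n) → Ω → ℝ) (i : Fin n) :
    (Fin 3 × Fin k × Fin n) ⊕ Fin 2 → Ω → ℝ
  | .inl (m, t, j) => fun ω =>
      ((if (j : ℕ) ≤ (i : ℕ) then (1 : ℝ) else -1) * (if m = 0 then 1 else -1)) *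
        (X (.inl (![1, 0, 0] m, t, i - j)) ω * X (.inl (![2, 3, 4] m, t, j)) ω)
  | .inr m => fun ω => X (.inr (m, i)) ω

lemma kyberNoise_eq_sum {Ω : Type*} {k n : ℕ}
    (s e r e1 cu : Fin k → Fin n → Ω → ℝ) (e2 cv : Fin n → Ω → ℝ) (i : Fin n) (ω : Ω) :
    kyberNoise s e r e1 cu e2 cv i ω =
      ∑ a : (Fin 3 × Fin k × Fin n) ⊕ Fin 2,
        kAtom (Sum.elim (fun x : Fin 5 × Fin k × Fin n => ![s, e, r, e1, cu] x.1 x.2.1 x.2.2)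
          (fun x : Fin 2 × Fin n => ![e2, cv] x.1 x.2)) i a ω := by
  rw [Fintype.sum_sum_type]
  simp only [kAtom, Fintype.sum_prod_type, Fin.sum_univ_three, Fin.sum_univ_two,
    Sum.elim_inl, Sum.elim_inr, Matrix.cons_val_zero, Matrix.cons_val_one, Matrix.head_cons,
    Matrix.cons_val_two, Matrix.tail_cons, Matrix.cons_val_three, Matrix.cons_val_four,
    kyberNoise, nconv]
  simp only [if_true, show ((1 : Fin 3) = 0) = False from by decide,
    show ((2 : Fin 3) = 0) = False from by decide, if_false, mul_one, mul_neg, neg_mul, one_mul]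
  have hsplit : ∑ x : Fin k, ∑ x1 : Fin n,
      (if (x1 : ℕ) ≤ (i : ℕ) then (1:ℝ) else -1) * s x (i - x1) ω * (e1 x x1 ω + cu x x1 ω)
      = (∑ x : Fin k, ∑ x1 : Fin n,
          (if (x1 : ℕ) ≤ (i : ℕ) then (1:ℝ) else -1) * s x (i - x1) ω * e1 x x1 ω)
        + ∑ x : Fin k, ∑ x1 : Fin n,
          (if (x1 : ℕ) ≤ (i : ℕ) then (1:ℝ) else -1) * s x (i - x1) ω * cu x x1 ω := by
    rw [← Finset.sum_add_distrib]
    refine Finset.sum_congr rfl fun t _ => ?_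
    rw [← Finset.sum_add_distrib]
    exact Finset.sum_congr rfl fun j _ => by ring
  rw [hsplit]
  have hA : ∑ x : Fin k, ∑ x1 : Fin n,
      (if (x1 : ℕ) ≤ (i : ℕ) then (1:ℝ) else -1) * (e x (i - x1) ω * r x x1 ω)
      = ∑ x : Fin k, ∑ x1 : Fin n,
        (if (x1 : ℕ) ≤ (i : ℕ) then (1:ℝ) else -1) * e x (i - x1) ω * r x x1 ω :=
    Finset.sum_congr rfl fun t _ => Finset.sum_congr rfl fun j _ => by ring
  have hB : ∀ (f g : Fin k → Fin n → ℝ), (∑ x : Fin k, ∑ x1 : Fin n,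
      -((if (x1 : ℕ) ≤ (i : ℕ) then (1:ℝ) else -1) * (f x x1 * g x x1)))
      = -∑ x : Fin k, ∑ x1 : Fin n,
        (if (x1 : ℕ) ≤ (i : ℕ) then (1:ℝ) else -1) * f x x1 * g x x1 := by
    intro f g
    rw [← Finset.sum_neg_distrib]
    refine Finset.sum_congr rfl fun t _ => ?_
    rw [← Finset.sum_neg_distrib]
    exact Finset.sum_congr rfl fun j _ => by ring
  rw [hA, hB (fun x x1 => s x (i - x1) ω) (fun x x1 => e1 x x1 ω),
    hB (fun x x1 => s x (i - x1) ω) (fun x x1 => cu x x1 ω)]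
  ring

theorem kyberNoise_uncorrelated
    {Ω : Type*} [MeasurableSpace Ω] (P : Measure Ω) [IsProbabilityMeasure P]
    (n k : ℕ) (hn : 0 < n) (hk : 0 < k)
    (s e r e1 cu : Fin k → Fin n → Ω → ℝ) (e2 cv : Fin n → Ω → ℝ)
    (hmeas : ∀ t j, Measurable (s t j) ∧ Measurable (e t j) ∧ Measurable (r t j) ∧
      Measurable (e1 t j) ∧ Measurable (cu t j))
    (hmeas' : ∀ j, Measurable (e2 j) ∧ Measurable (cv j))
    (hL2 : ∀ t j, MemLp (s t j) 2 P ∧ MemLp (e t j) 2 P ∧ MemLp (r t j) 2 P ∧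
      MemLp (e1 t j) 2 P ∧ MemLp (cu t j) 2 P)
    (hL2' : ∀ j, MemLp (e2 j) 2 P ∧ MemLp (cv j) 2 P)
    (hmean : ∀ t j, (∫ ω, s t j ω ∂P) = 0 ∧ (∫ ω, e t j ω ∂P) = 0 ∧
      (∫ ω, r t j ω ∂P) = 0 ∧ (∫ ω, e1 t j ω ∂P) = 0 ∧ (∫ ω, cu t j ω ∂P) = 0)
    (hmean' : ∀ j, (∫ ω, e2 j ω ∂P) = 0 ∧ (∫ ω, cv j ω ∂P) = 0)
    (hindep : iIndepFun
      (Sum.elim (fun x : Fin 5 × Fin k × Fin n => ![s, e, r, e1, cu] x.1 x.2.1 x.2.2)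
        (fun x : Fin 2 × Fin n => ![e2, cv] x.1 x.2)) P)
    (i i' : Fin n) (hii' : i ≠ i') :
    (∫ ω, kyberNoise s e r e1 cu e2 cv i ω * kyberNoise s e r e1 cu e2 cv i' ω ∂P)
      - (∫ ω, kyberNoise s e r e1 cu e2 cv i ω ∂P)
        * (∫ ω, kyberNoise s e r e1 cu e2 cv i' ω ∂P) = 0 := by
  haveI : NeZero n := ⟨hn.ne'⟩
  set X := (Sum.elim (fun x : Fin 5 × Fin k × Fin n => ![s, e, r, e1, cu] x.1 x.2.1 x.2.2)
      (fun x : Fin 2 × Fin n => ![e2, cv] x.1 x.2)) with hXdef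
  have hXmeas : ∀ a, Measurable (X a) := by
    rintro (⟨g, t, j⟩ | ⟨g, j⟩)
    · fin_cases g
      · exact (hmeas t j).1
      · exact (hmeas t j).2.1
      · exact (hmeas t j).2.2.1
      · exact (hmeas t j).2.2.2.1
      · exact (hmeas t j).2.2.2.2
    · fin_cases g
      · exact (hmeas' j).1
      · exact (hmeas' j).2
  have hXsq : ∀ a, MemLp (X a) 2 P := by
    rintro (⟨g, t, j⟩ | ⟨g, j⟩)
    · fin_cases g
      · exact (hL2 t j).1
      · exact (hL2 t j).2.1
      · exact (hL2 t j).2.2.1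
      · exact (hL2 t j).2.2.2.1
      · exact (hL2 t j).2.2.2.2
    · fin_cases g
      · exact (hL2' j).1
      · exact (hL2' j).2
  have hX0 : ∀ a, (∫ ω, X a ω ∂P) = 0 := by
    rintro (⟨g, t, j⟩ | ⟨g, j⟩)
    · fin_cases g
      · exact (hmean t j).1
      · exact (hmean t j).2.1
      · exact (hmean t j).2.2.1
      · exact (hmean t j).2.2.2.1
      · exact (hmean t j).2.2.2.2
    · fin_cases g
      · exact (hmean' j).1
      · exact (hmean' j).2
  -- index-distinctness helpers
  have hns : ∀ (m m' : Fin 3) (t t' : Fin k) (x y : Fin n),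
      (Sum.inl (![2, 3, 4] m, t, x) : (Fin 5 × Fin k × Fin n) ⊕ (Fin 2 × Fin n))
        ≠ Sum.inl (![1, 0, 0] m', t', y) := by
    intro m m' t t' x y h
    simp only [Sum.inl.injEq, Prod.mk.injEq] at h
    exact absurd h.1 (by fin_cases m <;> fin_cases m' <;> decide)
  -- single-atom facts
  have key1 : ∀ (i1 : Fin n) (a : (Fin 3 × Fin k × Fin n) ⊕ Fin 2),
      Integrable (kAtom X i1 a) P ∧ (∫ ω, kAtom X i1 a ω ∂P) = 0 := by
    intro i1 a
    rcases a with ⟨m, t, j⟩ | m2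
    · have hp := kyber_pair hindep hXsq hX0 (Ne.symm (hns m m t t j (i1 - j)))
      constructor
      · exact (hp.1.const_mul _ : _)
      · show (∫ ω, _ * (X (Sum.inl (![1,0,0] m, t, i1 - j)) ω
            * X (Sum.inl (![2,3,4] m, t, j)) ω) ∂P) = 0
        rw [integral_const_mul, hp.2, mul_zero]
    · constructor
      · show Integrable (fun ω => X (Sum.inr (m2, i1)) ω) P
        exact (hXsq _).integrable one_le_two
      · show (∫ ω, X (Sum.inr (m2, i1)) ω ∂P) = 0
        exact hX0 _
  -- pair-of-atoms facts
  have key : ∀ a b,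
      Integrable (fun ω => kAtom X i a ω * kAtom X i' b ω) P ∧
        (∫ ω, kAtom X i a ω * kAtom X i' b ω ∂P) = 0 := by
    intro a b
    rcases a with ⟨m, t, j⟩ | m2 <;> rcases b with ⟨m', t', j'⟩ | m2'
    · -- product × product
      have hne : (Sum.inl (![1,0,0] m, t, i - j) :
            (Fin 5 × Fin k × Fin n) ⊕ (Fin 2 × Fin n))
            ≠ Sum.inl (![1,0,0] m', t', i' - j')
          ∨ (Sum.inl (![2,3,4] m, t, j) :
            (Fin 5 × Fin k × Fin n) ⊕ (Fin 2 × Fin n))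
            ≠ Sum.inl (![2,3,4] m', t', j') := by
        by_contra hcon
        push_neg at hcon
        obtain ⟨h1, h2⟩ := hcon
        simp only [Sum.inl.injEq, Prod.mk.injEq] at h1 h2
        have hj : j = j' := h2.2.2
        subst hj
        exact hii' (sub_left_inj.mp h1.2.2)
      have hq := kyber_quad hindep hXmeas hXsq hX0
        (hns m m t t j (i - j)) (hns m m' t t' j (i' - j'))
        (hns m' m t' t j' (i - j)) (hns m' m' t' t' j' (i' - j')) hne
      have heq : (fun ω => kAtom X i (Sum.inl (m, t, j)) ω
            * kAtom X i' (Sum.inl (m', t', j')) ω)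
          = fun ω => (((if (j : ℕ) ≤ (i : ℕ) then (1:ℝ) else -1) * (if m = 0 then 1 else -1))
              * ((if (j' : ℕ) ≤ (i' : ℕ) then (1:ℝ) else -1) * (if m' = 0 then 1 else -1)))
            * (X (Sum.inl (![1,0,0] m, t, i - j)) ω * X (Sum.inl (![2,3,4] m, t, j)) ω
              * (X (Sum.inl (![1,0,0] m', t', i' - j')) ω
                * X (Sum.inl (![2,3,4] m', t', j')) ω)) := by
        funext ω; simp only [kAtom]; ring
      rw [heq]
      exact ⟨hq.1.const_mul _, by rw [integral_const_mul, hq.2, mul_zero]⟩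
    · -- product × single
      have ht := kyber_triple hindep hXmeas hXsq hX0
        (u := Sum.inl (![1,0,0] m, t, i - j)) (v := Sum.inl (![2,3,4] m, t, j))
        (w := Sum.inr (m2', i'))
        (hns m m t t j (i - j)) (by simp) (by simp)
      have heq : (fun ω => kAtom X i (Sum.inl (m, t, j)) ω * kAtom X i' (Sum.inr m2') ω)
          = fun ω => ((if (j : ℕ) ≤ (i : ℕ) then (1:ℝ) else -1) * (if m = 0 then 1 else -1))
            * (X (Sum.inl (![1,0,0] m, t, i - j)) ω * X (Sum.inl (![2,3,4] m, t, j)) ω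
              * X (Sum.inr (m2', i')) ω) := by
        funext ω; simp only [kAtom]; ring
      rw [heq]
      exact ⟨ht.1.const_mul _, by rw [integral_const_mul, ht.2, mul_zero]⟩
    · -- single × product
      have ht := kyber_triple hindep hXmeas hXsq hX0
        (u := Sum.inl (![1,0,0] m', t', i' - j')) (v := Sum.inl (![2,3,4] m', t', j'))
        (w := Sum.inr (m2, i))
        (hns m' m' t' t' j' (i' - j')) (by simp) (by simp)
      have heq : (fun ω => kAtom X i (Sum.inr m2) ω * kAtom X i' (Sum.inl (m', t', j')) ω)
          = fun ω => ((if (j' : ℕ) ≤ (i' : ℕ) then (1:ℝ) else -1) * (if m' = 0 then 1 else -1))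
            * (X (Sum.inl (![1,0,0] m', t', i' - j')) ω * X (Sum.inl (![2,3,4] m', t', j')) ω
              * X (Sum.inr (m2, i)) ω) := by
        funext ω; simp only [kAtom]; ring
      rw [heq]
      exact ⟨ht.1.const_mul _, by rw [integral_const_mul, ht.2, mul_zero]⟩
    · -- single × single
      have hne : (Sum.inr (m2, i) : (Fin 5 × Fin k × Fin n) ⊕ (Fin 2 × Fin n))
          ≠ Sum.inr (m2', i') := by
        simp only [ne_eq, Sum.inr.injEq, Prod.mk.injEq, not_and]
        intro _; exact hii'
      exact kyber_pair hindep hXsq hX0 hne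
  -- means are zero
  have hNmean : ∀ i1 : Fin n, (∫ ω, kyberNoise s e r e1 cu e2 cv i1 ω ∂P) = 0 := by
    intro i1
    have : (fun ω => kyberNoise s e r e1 cu e2 cv i1 ω)
        = fun ω => ∑ a, kAtom X i1 a ω := by
      funext ω; exact kyberNoise_eq_sum s e r e1 cu e2 cv i1 ω
    rw [this, integral_finset_sum _ (fun a _ => (key1 i1 a).1)]
    exact Finset.sum_eq_zero fun a _ => (key1 i1 a).2
  have hNN : (∫ ω, kyberNoise s e r e1 cu e2 cv i ω
      * kyberNoise s e r e1 cu e2 cv i' ω ∂P) = 0 := by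
    have hfun : (fun ω => kyberNoise s e r e1 cu e2 cv i ω
          * kyberNoise s e r e1 cu e2 cv i' ω)
        = fun ω => ∑ a, ∑ b, kAtom X i a ω * kAtom X i' b ω := by
      funext ω
      rw [kyberNoise_eq_sum s e r e1 cu e2 cv i ω, kyberNoise_eq_sum s e r e1 cu e2 cv i' ω,
        Finset.sum_mul_sum]
    rw [hfun, integral_finset_sum _
      (fun a _ => integrable_finset_sum _ (fun b _ => (key a b).1))]
    refine Finset.sum_eq_zero fun a _ => ?_
    rw [integral_finset_sum _ (fun b _ => (key a b).1)]
    exact Finset.sum_eq_zero fun b _ => (key a b).2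
  rw [hNN, hNmean i, zero_mul, sub_zero]
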